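/- arXiv:1606.01054 — 2 statements merged into one kernel-verified Lean document; each statement's English description precedes it below -/
import Mathlib

section
/- Assume P satisfies P ∈ C¹([0,∞)), P(0)=0, P' > 0, 0 < (γP(Z) − P'(Z)Z)/Z ≤ c for Z > 0, and lim_{Z→∞} P(Z)/Z^γ = p_∞ > 0, with γ > 1. Let s₁(ρ,θ) = M(ρ θ^{−1/(γ−1)}) where M' (Z) = −(1/(γ−1))(γP(Z) − P'(Z)Z)/Z² and lim_{Z→∞} M(Z) = 0. Then there is a constant C such that s₁(ρ,θ) ≤ C(1 + |log ρ|) for all ρ ∈ (0,∞), θ ∈ (0,1). -/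
open Set Filter

/-- Under the structural hypotheses on `P` (with `γ > 1`) and with `M` having derivative
`M'(Z) = −(1/(γ−1))(γP(Z) − P'(Z)Z)/Z²` and `M(Z) → 0` as `Z → ∞`, the entropy
`s₁(ρ,θ) = M(ρ θ^{−1/(γ−1)})` satisfies `s₁(ρ,θ) ≤ C(1 + |log ρ|)` for all
`ρ ∈ (0,∞)` and `θ ∈ (0,1)`. -/
theorem entropy_bound_low_temperature
    (γ c pinf : ℝ) (hγ : 1 < γ) (hpinf : 0 < pinf) (P P' M : ℝ → ℝ)
    (hP : ∀ Z : ℝ, 0 ≤ Z → HasDerivAt P (P' Z) Z)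
    (hP0 : P 0 = 0)
    (hP' : ∀ Z : ℝ, 0 ≤ Z → 0 < P' Z)
    (hstab : ∀ Z : ℝ, 0 < Z → 0 < (γ * P Z - P' Z * Z) / Z ∧ (γ * P Z - P' Z * Z) / Z ≤ c)
    (hPinf : Tendsto (fun Z => P Z / Z ^ γ) atTop (nhds pinf))
    (hM : ∀ Z : ℝ, 0 < Z →
      HasDerivAt M (-(1 / (γ - 1)) * (γ * P Z - P' Z * Z) / Z ^ 2) Z)
    (hMinf : Tendsto M atTop (nhds 0)) :
    ∃ C : ℝ, ∀ ρ θ : ℝ, 0 < ρ → θ ∈ Ioo (0:ℝ) 1 →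
      M (ρ * θ ^ (-(1 / (γ - 1)))) ≤ C * (1 + |Real.log ρ|) := by
  have hγ1 : (0:ℝ) < γ - 1 := by linarith
  have hc : (0:ℝ) < c := lt_of_lt_of_le (hstab 1 one_pos).1 (hstab 1 one_pos).2
  set K := c / (γ - 1) with hKdef
  have hK : 0 < K := div_pos hc hγ1
  have hint : interior (Ioi (0:ℝ)) = Ioi 0 := interior_Ioi
  -- M is antitone on (0,∞)
  have hMcont : ContinuousOn M (Ioi 0) := fun x hx =>
    ((hM x hx).continuousAt).continuousWithinAt
  have hManti : AntitoneOn M (Ioi 0) := by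
    apply antitoneOn_of_hasDerivWithinAt_nonpos (convex_Ioi 0) hMcont
    · intro x hx
      rw [hint] at hx ⊢
      exact (hM x hx).hasDerivWithinAt
    · intro x hx
      rw [hint] at hx
      have h1 := (hstab x hx).1
      have hA : 0 ≤ γ * P x - P' x * x := by
        by_contra h
        push_neg at h
        have : (γ * P x - P' x * x) / x < 0 := div_neg_of_neg_of_pos h hx
        linarith
      have h2 : 0 ≤ (1 / (γ - 1)) * (γ * P x - P' x * x) / x ^ 2 := by positivity
      have h3 : -(1 / (γ - 1)) * (γ * P x - P' x * x) / x ^ 2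
          = -((1 / (γ - 1)) * (γ * P x - P' x * x) / x ^ 2) := by ring
      linarith [h3 ▸ neg_nonpos_of_nonneg h2]
  -- g = M + K log is monotone on (0,∞)
  have hgmono : MonotoneOn (fun x => M x + K * Real.log x) (Ioi 0) := by
    apply monotoneOn_of_hasDerivWithinAt_nonneg (convex_Ioi 0)
      (f' := fun x => -(1 / (γ - 1)) * (γ * P x - P' x * x) / x ^ 2 + K * x⁻¹)
    · intro x hx
      exact ((hM x hx).add
        ((Real.hasDerivAt_log (ne_of_gt hx)).const_mul K)).continuousAt.continuousWithinAt
    · intro x hx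
      rw [hint] at hx ⊢
      exact ((hM x hx).add ((Real.hasDerivAt_log hx.ne').const_mul K)).hasDerivWithinAt
    · intro x hx
      rw [hint] at hx
      have hle : γ * P x - P' x * x ≤ c * x := by
        have := (hstab x hx).2
        rwa [div_le_iff₀ hx] at this
      have key : (1 / (γ - 1)) * (γ * P x - P' x * x) / x ^ 2 ≤ K * x⁻¹ := by
        calc (1 / (γ - 1)) * (γ * P x - P' x * x) / x ^ 2
            ≤ (1 / (γ - 1)) * (c * x) / x ^ 2 := by
              gcongr <;> positivity
          _ = (c / (γ - 1)) * (x / x ^ 2) := by ring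
          _ = K * x⁻¹ := by
              rw [hKdef, sq, div_mul_eq_div_div, div_self (ne_of_gt hx), one_div]
      have h3 : -(1 / (γ - 1)) * (γ * P x - P' x * x) / x ^ 2
          = -((1 / (γ - 1)) * (γ * P x - P' x * x) / x ^ 2) := by ring
      rw [h3]
      linarith
  -- key bound : M ρ ≤ M 1 + K * |log ρ| for ρ > 0
  have hbound : ∀ ρ : ℝ, 0 < ρ → M ρ ≤ M 1 + K * |Real.log ρ| := by
    intro ρ hρ
    rcases le_or_gt 1 ρ with h1 | h1
    · have := hManti (mem_Ioi.mpr one_pos) (mem_Ioi.mpr hρ) h1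
      have habs : 0 ≤ |Real.log ρ| := abs_nonneg _
      nlinarith
    · have := hgmono (mem_Ioi.mpr hρ) (mem_Ioi.mpr one_pos) (le_of_lt h1)
      simp only [Real.log_one, mul_zero, add_zero] at this
      have hlog : Real.log ρ < 0 := Real.log_neg hρ h1
      rw [abs_of_neg hlog]
      linarith
  refine ⟨|M 1| + K, fun ρ θ hρ hθ => ?_⟩
  have hθpow : 1 < θ ^ (-(1 / (γ - 1))) := by
    rw [Real.one_lt_rpow_iff_of_pos hθ.1]
    right
    constructor
    · exact hθ.2
    · rw [neg_lt, neg_zero]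
      positivity
  have hZρ : ρ ≤ ρ * θ ^ (-(1 / (γ - 1))) := by
    nlinarith
  have hZpos : 0 < ρ * θ ^ (-(1 / (γ - 1))) := lt_of_lt_of_le hρ hZρ
  calc M (ρ * θ ^ (-(1 / (γ - 1))))
      ≤ M ρ := hManti (mem_Ioi.mpr hρ) (mem_Ioi.mpr hZpos) hZρ
    _ ≤ M 1 + K * |Real.log ρ| := hbound ρ hρ
    _ ≤ (|M 1| + K) * (1 + |Real.log ρ|) := by
        have h1 : M 1 ≤ |M 1| := le_abs_self _
        have h2 : 0 ≤ |M 1| := abs_nonneg _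
        have h3 : 0 ≤ |Real.log ρ| := abs_nonneg _
        nlinarith
end

section
/- Under the same structural hypotheses on P and M, there exists C such that s₁(ρ,θ) = M(ρ θ^{−1/(γ−1)}) ≤ C(1 + |log ρ| + log θ) for all ρ ∈ (0,∞) and θ ∈ (1,∞). -/
open Set Filter

/-- Under the structural hypotheses on `P` (with `γ > 1`) and with `M` having derivative
`M'(Z) = −(1/(γ−1))(γP(Z) − P'(Z)Z)/Z²` and `M(Z) → 0` as `Z → ∞`, the entropy
`s₁(ρ,θ) = M(ρ θ^{−1/(γ−1)})` satisfies `s₁(ρ,θ) ≤ C(1 + |log ρ| + log θ)` for all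
`ρ ∈ (0,∞)` and `θ ∈ (1,∞)`. -/
theorem entropy_bound_high_temperature
    (γ c pinf : ℝ) (hγ : 1 < γ) (hpinf : 0 < pinf) (P P' M : ℝ → ℝ)
    (hP : ∀ Z : ℝ, 0 ≤ Z → HasDerivAt P (P' Z) Z)
    (hP0 : P 0 = 0)
    (hP' : ∀ Z : ℝ, 0 ≤ Z → 0 < P' Z)
    (hstab : ∀ Z : ℝ, 0 < Z → 0 < (γ * P Z - P' Z * Z) / Z ∧ (γ * P Z - P' Z * Z) / Z ≤ c)
    (hPinf : Tendsto (fun Z => P Z / Z ^ γ) atTop (nhds pinf))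
    (hM : ∀ Z : ℝ, 0 < Z →
      HasDerivAt M (-(1 / (γ - 1)) * (γ * P Z - P' Z * Z) / Z ^ 2) Z)
    (hMinf : Tendsto M atTop (nhds 0)) :
    ∃ C : ℝ, ∀ ρ θ : ℝ, 0 < ρ → 1 < θ →
      M (ρ * θ ^ (-(1 / (γ - 1)))) ≤ C * (1 + |Real.log ρ| + Real.log θ) := by
  have hγ1 : (0:ℝ) < γ - 1 := by linarith
  set K : ℝ := c / (γ - 1) with hK
  have hc : 0 < c := lt_of_lt_of_le (hstab 1 one_pos).1 (hstab 1 one_pos).2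
  have hKpos : 0 < K := div_pos hc hγ1
  -- N(Z) = M Z + K * log Z is monotone on Ioi 0
  have hN : ∀ Z : ℝ, 0 < Z →
      HasDerivAt (fun Z => M Z + K * Real.log Z)
        (-(1 / (γ - 1)) * (γ * P Z - P' Z * Z) / Z ^ 2 + K * Z⁻¹) Z := by
    intro Z hZ
    exact (hM Z hZ).add ((Real.hasDerivAt_log hZ.ne').const_mul K)
  have hNmono : MonotoneOn (fun Z => M Z + K * Real.log Z) (Ioi 0) := by
    apply monotoneOn_of_deriv_nonneg (convex_Ioi 0)
    · intro x hx
      exact (hN x hx).continuousAt.continuousWithinAt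
    · intro x hx
      rw [interior_Ioi] at hx
      exact (hN x hx).differentiableAt.differentiableWithinAt
    · intro x hx
      rw [interior_Ioi] at hx
      rw [(hN x hx).deriv]
      have hx0 : 0 < x := hx
      have hg : γ * P x - P' x * x ≤ c * x := by
        have := (hstab x hx).2
        rwa [div_le_iff₀ hx0] at this
      have hx2 : (0:ℝ) < x ^ 2 := by positivity
      rw [hK]
      have heq : -(1 / (γ - 1)) * (γ * P x - P' x * x) / x ^ 2 + (c / (γ - 1)) * x⁻¹ =
          (c * x - (γ * P x - P' x * x)) / ((γ - 1) * x ^ 2) := by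
        field_simp
        ring
      rw [heq]
      exact div_nonneg (by linarith) (by positivity)
  -- M is antitone on Ioi 0
  have hManti : AntitoneOn M (Ioi 0) := by
    apply antitoneOn_of_deriv_nonpos (convex_Ioi 0)
    · intro x hx
      exact (hM x hx).continuousAt.continuousWithinAt
    · intro x hx
      rw [interior_Ioi] at hx
      exact (hM x hx).differentiableAt.differentiableWithinAt
    · intro x hx
      rw [interior_Ioi] at hx
      rw [(hM x hx).deriv]
      have hx0 : 0 < x := hx
      have hg : 0 < γ * P x - P' x * x := by
        have := (hstab x hx).1
        have := mul_pos this hx0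
        rw [div_mul_cancel₀] at this
        · exact this
        · exact hx.ne'
      have hx2 : (0:ℝ) < x ^ 2 := by positivity
      apply div_nonpos_of_nonpos_of_nonneg _ hx2.le
      have : 0 < 1 / (γ - 1) := by positivity
      nlinarith
  -- Key bound: M Z ≤ M 1 + K * |log Z| for all Z > 0
  have key : ∀ Z : ℝ, 0 < Z → M Z ≤ M 1 + K * |Real.log Z| := by
    intro Z hZ
    rcases le_or_gt Z 1 with h | h
    · have := hNmono (mem_Ioi.mpr hZ) (mem_Ioi.mpr one_pos) h
      simp only [Real.log_one, mul_zero, add_zero] at this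
      have hlog : Real.log Z ≤ 0 := Real.log_nonpos hZ.le h
      have : M Z ≤ M 1 - K * Real.log Z := by linarith
      calc M Z ≤ M 1 - K * Real.log Z := this
        _ ≤ M 1 + K * |Real.log Z| := by
            rw [abs_of_nonpos hlog]; ring_nf; rfl
    · have hMle : M Z ≤ M 1 := hManti (mem_Ioi.mpr one_pos) (mem_Ioi.mpr hZ) h.le
      have : 0 ≤ K * |Real.log Z| := by positivity
      linarith
  refine ⟨|M 1| + K + K / (γ - 1), ?_⟩
  intro ρ θ hρ hθ
  have hθ0 : 0 < θ := lt_trans one_pos hθ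
  have hZpos : 0 < ρ * θ ^ (-(1 / (γ - 1))) := mul_pos hρ (Real.rpow_pos_of_pos hθ0 _)
  have hlogZ : Real.log (ρ * θ ^ (-(1 / (γ - 1)))) =
      Real.log ρ + (-(1 / (γ - 1))) * Real.log θ := by
    rw [Real.log_mul hρ.ne' (Real.rpow_pos_of_pos hθ0 _).ne', Real.log_rpow hθ0]
  have hlogθ : 0 < Real.log θ := Real.log_pos hθ
  have habs : |Real.log (ρ * θ ^ (-(1 / (γ - 1))))| ≤
      |Real.log ρ| + (1 / (γ - 1)) * Real.log θ := by
    rw [hlogZ]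
    calc |Real.log ρ + (-(1 / (γ - 1))) * Real.log θ|
        ≤ |Real.log ρ| + |(-(1 / (γ - 1))) * Real.log θ| := abs_add_le _ _
      _ = |Real.log ρ| + (1 / (γ - 1)) * Real.log θ := by
          rw [abs_mul, abs_neg, abs_of_pos (by positivity : (0:ℝ) < 1 / (γ - 1)),
            abs_of_pos hlogθ]
  have h1 := key _ hZpos
  have habρ : 0 ≤ |Real.log ρ| := abs_nonneg _
  have hM1 : M 1 ≤ |M 1| := le_abs_self _
  have hKd : 0 < K / (γ - 1) := by positivity
  have habs' : K * |Real.log (ρ * θ ^ (-(1 / (γ - 1))))| ≤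
      K * |Real.log ρ| + (K / (γ - 1)) * Real.log θ := by
    have := mul_le_mul_of_nonneg_left habs hKpos.le
    calc K * |Real.log (ρ * θ ^ (-(1 / (γ - 1))))|
        ≤ K * (|Real.log ρ| + (1 / (γ - 1)) * Real.log θ) := this
      _ = K * |Real.log ρ| + (K / (γ - 1)) * Real.log θ := by ring
  nlinarith [mul_nonneg (abs_nonneg (M 1)) habρ, mul_nonneg (abs_nonneg (M 1)) hlogθ.le,
    mul_nonneg hKpos.le hlogθ.le, mul_nonneg hKd.le habρ, mul_nonneg hKpos.le habρ,
    mul_nonneg hKd.le hlogθ.le, abs_nonneg (M 1)]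
end
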